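/- arXiv:0903.5269 — 2 statements merged into one kernel-verified Lean document; each statement's English description precedes it below -/
import Mathlib

section
/- For every R ∈ 𝔯(V): (1) Ric*(α_j(R)) = Ric(α_j(R)) for j = 1, 2; (2) Ric*(α_j(R)) = −Ric(α_j(R)) for j = 3, 4; (3) Ric*(α₅(R)) = 3·Ric(α₅(R)); (4) Ric*(α_j(R)) = 0 for j = 6, 7, 8; (5) the g-trace of Ric*(α_j(R)) vanishes for j = 2, …, 8. -/
open scoped BigOperators
open Pointwise

namespace GCT

variable {V : Type*} [AddCommGroup V] [Module ℝ V]

/-- Linearity of a real valued function of one vector variable. -/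
def IsLin (f : V → ℝ) : Prop :=
  (∀ x y : V, f (x + y) = f x + f y) ∧ (∀ (c : ℝ) (x : V), f (c • x) = c * f x)

/-- Bilinearity. -/
def IsBilin (h : V → V → ℝ) : Prop :=
  (∀ y, IsLin (fun x => h x y)) ∧ (∀ x, IsLin (fun y => h x y))

/-- 4-linearity. -/
def IsMulti4 (F : V → V → V → V → ℝ) : Prop :=
  (∀ y z w, IsLin (fun x => F x y z w)) ∧ (∀ x z w, IsLin (fun y => F x y z w)) ∧
    (∀ x y w, IsLin (fun z => F x y z w)) ∧ (∀ x y z, IsLin (fun w => F x y z w))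

/-- The space 𝔯(V) of generalized curvature tensors. -/
def rSet (V : Type*) [AddCommGroup V] [Module ℝ V] : Set (V → V → V → V → ℝ) :=
  {F | IsMulti4 F ∧ (∀ x y z w, F x y z w = - F y x z w) ∧
    (∀ x y z w, F x y z w + F y z x w + F z x y w = 0)}

/-- The space 𝔞(V) of algebraic curvature tensors. -/
def aSet (V : Type*) [AddCommGroup V] [Module ℝ V] : Set (V → V → V → V → ℝ) :=
  {F | F ∈ rSet V ∧ ∀ x y z w, F x y z w = - F x y w z}

/-- The space 𝔰(V). -/
def sSet (V : Type*) [AddCommGroup V] [Module ℝ V] : Set (V → V → V → V → ℝ) :=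
  {F | F ∈ rSet V ∧ ∀ x y z w, F x y z w = F x y w z}

/-- The conjugate tensor R*. -/
def conj (F : V → V → V → V → ℝ) : V → V → V → V → ℝ := fun x y z w => - F x y w z

/-- The product h·k of two bilinear forms. -/
def prodB (h k : V → V → ℝ) : V → V → V → V → ℝ := fun x y z w => h x y * k z w

/-- The wedge product h ∧_t k of two bilinear forms. -/
def wedge (t : ℝ) (h k : V → V → ℝ) : V → V → V → V → ℝ :=
  fun x y z w => h x z * k y w - h y z * k x w - t * (h x w * k y z - h y w * k x z)

/-- Antisymmetric part Λh. -/
noncomputable def lamB (h : V → V → ℝ) : V → V → ℝ := fun x y => (h x y - h y x) / 2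

/-- Symmetric part Sh. -/
noncomputable def symB (h : V → V → ℝ) : V → V → ℝ := fun x y => (h x y + h y x) / 2

/-- The idempotent ψ. -/
noncomputable def psi (F : V → V → V → V → ℝ) : V → V → V → V → ℝ :=
  fun x y z w => (F x y z w + F y x w z + F z w x y + F w z y x) / 4

/-- The idempotent μ. -/
noncomputable def mu (F : V → V → V → V → ℝ) : V → V → V → V → ℝ :=
  fun x y z w =>
    (3 * F x y z w + 3 * F x y w z + F x w z y + F x z w y + F w y z x + F z y w x) / 8

/-- A linear equivalence is a g-isometry. -/
def IsIsometry (g : V → V → ℝ) (φ : V ≃ₗ[ℝ] V) : Prop := ∀ x y, g (φ x) (φ y) = g x y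

/-- Pull back of a 4-tensor along a linear equivalence (the natural action). -/
def pullT (φ : V ≃ₗ[ℝ] V) (F : V → V → V → V → ℝ) : V → V → V → V → ℝ :=
  fun x y z w => F (φ x) (φ y) (φ z) (φ w)

/-- Invariance of a set of 4-tensors under the orthogonal group O(V,g). -/
def OInv (g : V → V → ℝ) (S : Set (V → V → V → V → ℝ)) : Prop :=
  ∀ φ : V ≃ₗ[ℝ] V, IsIsometry g φ → ∀ F ∈ S, pullT φ F ∈ S

/-- Irreducibility of a subspace of 4-tensors as an O(V,g)-module:
there is no proper nonzero invariant subspace. -/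
def OIrred (g : V → V → ℝ) (W : Set (V → V → V → V → ℝ)) : Prop :=
  ∀ U : Submodule ℝ (V → V → V → V → ℝ), (U : Set (V → V → V → V → ℝ)) ⊆ W →
    (∀ φ : V ≃ₗ[ℝ] V, IsIsometry g φ → ∀ F ∈ U, pullT φ F ∈ U) →
    (U : Set (V → V → V → V → ℝ)) = {0} ∨ (U : Set (V → V → V → V → ℝ)) = W

/-- Isomorphism of two invariant subspaces as O(V,g)-modules. -/
def OEquivMod (g : V → V → ℝ) (S T : Set (V → V → V → V → ℝ)) : Prop :=
  ∃ e : (V → V → V → V → ℝ) →ₗ[ℝ] (V → V → V → V → ℝ),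
    Set.BijOn e S T ∧
      ∀ φ : V ≃ₗ[ℝ] V, IsIsometry g φ → ∀ F ∈ S, e (pullT φ F) = pullT φ (e F)

variable (n : ℕ) (b : Module.Basis (Fin n) ℝ V) (g : V → V → ℝ)

/-- Inverse metric components g^{ij}. -/
noncomputable def ginv : Matrix (Fin n) (Fin n) ℝ :=
  (Matrix.of fun i j => g (b i) (b j))⁻¹

/-- Ric(R)(x,y) := Σ g^{ij} R(e_i,x,y,e_j). -/
noncomputable def Ric (F : V → V → V → V → ℝ) : V → V → ℝ :=
  fun x y => ∑ i, ∑ j, ginv n b g i j * F (b i) x y (b j)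

/-- Ric*(R)(x,y) := Σ g^{ij} R(x,e_i,e_j,y). -/
noncomputable def RicS (F : V → V → V → V → ℝ) : V → V → ℝ :=
  fun x y => ∑ i, ∑ j, ginv n b g i j * F x (b i) (b j) y

/-- The generalized scalar curvature τ(R). -/
noncomputable def tau (F : V → V → V → V → ℝ) : ℝ :=
  ∑ i, ∑ j, ∑ k, ∑ l, ginv n b g i l * ginv n b g j k * F (b i) (b j) (b k) (b l)

/-- The g-trace of a bilinear form. -/
noncomputable def trg (h : V → V → ℝ) : ℝ := ∑ i, ∑ j, ginv n b g i j * h (b i) (b j)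

/-- The scalar product on 4-tensors given by full contraction with g. -/
noncomputable def inner4 (F T : V → V → V → V → ℝ) : ℝ :=
  ∑ i, ∑ j, ∑ k, ∑ l, ∑ i', ∑ j', ∑ k', ∑ l',
    ginv n b g i i' * ginv n b g j j' * ginv n b g k k' * ginv n b g l l' *
      F (b i) (b j) (b k) (b l) * T (b i') (b j') (b k') (b l')

/-- W-projection π₁. -/
noncomputable def pi1 (F : V → V → V → V → ℝ) : V → V → V → V → ℝ :=
  (-(tau n b g F) / ((n : ℝ) * ((n : ℝ) - 1))) • wedge 0 g g

/-- W-projection π₂. -/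
noncomputable def pi2 (F : V → V → V → V → ℝ) : V → V → V → V → ℝ :=
  ((1 : ℝ) / ((n : ℝ) - 1)) • wedge 0 (((tau n b g F) / (n : ℝ)) • g - symB (Ric n b g F)) g

/-- W-projection π₃. -/
noncomputable def pi3 (F : V → V → V → V → ℝ) : V → V → V → V → ℝ :=
  ((-1 : ℝ) / ((n : ℝ) + 1)) •
    ((2 : ℝ) • prodB (lamB (Ric n b g F)) g + wedge 0 (lamB (Ric n b g F)) g)

/-- W-projection π₄. -/
noncomputable def pi4 (F : V → V → V → V → ℝ) : V → V → V → V → ℝ :=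
  ((-1 : ℝ) / ((n : ℝ) ^ 2 - 4)) •
      ((2 : ℝ) • prodB (lamB (RicS n b g F)) g + wedge ((n : ℝ) + 1) (lamB (RicS n b g F)) g)
    - ((3 : ℝ) / (((n : ℝ) ^ 2 - 4) * ((n : ℝ) + 1))) •
      ((2 : ℝ) • prodB (lamB (Ric n b g F)) g + wedge ((n : ℝ) + 1) (lamB (Ric n b g F)) g)

/-- W-projection π₅. -/
noncomputable def pi5 (F : V → V → V → V → ℝ) : V → V → V → V → ℝ :=
  ((1 : ℝ) / (((n : ℝ) - 1) * ((n : ℝ) - 2))) •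
    ((tau n b g F) • wedge 0 g g -
      ((1 : ℝ) / (n : ℝ)) •
        wedge ((n : ℝ) - 1) (symB (Ric n b g F + ((n : ℝ) - 1) • RicS n b g F)) g)

/-- W-projection π₆. -/
noncomputable def pi6 (F : V → V → V → V → ℝ) : V → V → V → V → ℝ :=
  psi F + ((1 : ℝ) / (2 * ((n : ℝ) - 2))) • wedge 1 (symB (Ric n b g F + RicS n b g F)) g
    - ((tau n b g F) / (((n : ℝ) - 1) * ((n : ℝ) - 2))) • wedge 0 g g

/-- W-projection π₇. -/
noncomputable def pi7 (F : V → V → V → V → ℝ) : V → V → V → V → ℝ :=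
  mu F + ((1 : ℝ) / (2 * (n : ℝ))) • wedge (-1) (symB (Ric n b g F - RicS n b g F)) g
    + ((1 : ℝ) / (2 * ((n : ℝ) + 2))) • prodB (lamB ((3 : ℝ) • Ric n b g F - RicS n b g F)) g
    + ((1 : ℝ) / (4 * ((n : ℝ) + 2))) • wedge (-1) (lamB ((3 : ℝ) • Ric n b g F - RicS n b g F)) g

/-- W-projection π₈. -/
noncomputable def pi8 (F : V → V → V → V → ℝ) : V → V → V → V → ℝ :=
  F - psi F - mu F
    + ((1 : ℝ) / (2 * ((n : ℝ) - 2))) • prodB (lamB (Ric n b g F + RicS n b g F)) g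
    + ((1 : ℝ) / (4 * ((n : ℝ) - 2))) • wedge 3 (lamB (Ric n b g F + RicS n b g F)) g

/-- A-projection α₁. -/
noncomputable def al1 (F : V → V → V → V → ℝ) : V → V → V → V → ℝ :=
  (-(tau n b g F) / ((n : ℝ) * ((n : ℝ) - 1))) • wedge 0 g g

/-- A-projection α₂. -/
noncomputable def al2 (F : V → V → V → V → ℝ) : V → V → V → V → ℝ :=
  ((-1 : ℝ) / (2 * ((n : ℝ) - 2))) • wedge 1 (symB (Ric n b g F + RicS n b g F)) g
    + ((2 * tau n b g F) / ((n : ℝ) * ((n : ℝ) - 2))) • wedge 0 g g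

/-- A-projection α₃. -/
noncomputable def al3 (F : V → V → V → V → ℝ) : V → V → V → V → ℝ :=
  ((-1 : ℝ) / (2 * (n : ℝ))) • wedge (-1) (symB (Ric n b g F - RicS n b g F)) g

/-- A-projection α₄. -/
noncomputable def al4 (F : V → V → V → V → ℝ) : V → V → V → V → ℝ :=
  ((-1 : ℝ) / (4 * ((n : ℝ) + 2))) •
    ((2 : ℝ) • prodB (lamB ((3 : ℝ) • Ric n b g F - RicS n b g F)) g
      + wedge (-1) (lamB ((3 : ℝ) • Ric n b g F - RicS n b g F)) g)

/-- A-projection α₅. -/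
noncomputable def al5 (F : V → V → V → V → ℝ) : V → V → V → V → ℝ :=
  ((-1 : ℝ) / (4 * ((n : ℝ) - 2))) •
    ((2 : ℝ) • prodB (lamB (Ric n b g F + RicS n b g F)) g
      + wedge 3 (lamB (Ric n b g F + RicS n b g F)) g)

/-- A-projection α₆. -/
noncomputable def al6 (F : V → V → V → V → ℝ) : V → V → V → V → ℝ :=
  psi F - al1 n b g F - al2 n b g F

/-- A-projection α₇. -/
noncomputable def al7 (F : V → V → V → V → ℝ) : V → V → V → V → ℝ :=
  mu F - al3 n b g F - al4 n b g F

/-- A-projection α₈. -/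
noncomputable def al8 (F : V → V → V → V → ℝ) : V → V → V → V → ℝ :=
  F - mu F - psi F - al5 n b g F

/-- Curvature tensors of constant curvature type. -/
noncomputable def uSet : Set (V → V → V → V → ℝ) :=
  {F | ∃ c : ℝ, ∀ x y z w, F x y z w = c * (g x w * g y z - g x z * g y w)}

/-- Ricci traceless algebraic curvature tensors built from a traceless symmetric form. -/
noncomputable def zSet : Set (V → V → V → V → ℝ) :=
  {F | ∃ Xi : V → V → ℝ, IsBilin Xi ∧ (∀ x y, Xi x y = Xi y x) ∧ trg n b g Xi = 0 ∧
    ∀ x y z w, F x y z w = Xi x w * g y z + g x w * Xi y z - Xi x z * g y w - g x z * Xi y w}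

/-- Weyl type (Ricci flat algebraic) curvature tensors. -/
noncomputable def wSet : Set (V → V → V → V → ℝ) :=
  {F | F ∈ aSet V ∧ Ric n b g F = fun _ _ => 0}

/-- The projective curvature tensor p(R). -/
noncomputable def pProj (F : V → V → V → V → ℝ) : V → V → V → V → ℝ :=
  F - pi1 n b g F - pi2 n b g F - pi3 n b g F


section Aux

variable {V : Type*} [AddCommGroup V] [Module ℝ V]

lemma IsLin.zero {f : V → ℝ} (hf : IsLin f) : f 0 = 0 := by
  have := hf.2 0 0; simpa using this

lemma lin_sum {f : V → ℝ} (hf : IsLin f) {ι : Type*} (s : Finset ι) (c : ι → ℝ) (v : ι → V) :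
    f (∑ i ∈ s, c i • v i) = ∑ i ∈ s, c i * f (v i) := by
  classical
  induction s using Finset.induction with
  | empty => simpa using hf.zero
  | insert _ _ h ih =>
      rw [Finset.sum_insert h, hf.1, hf.2, ih, Finset.sum_insert h]

variable (n : ℕ) (b : Module.Basis (Fin n) ℝ V) (g : V → V → ℝ)

/-- The Gram matrix. -/
noncomputable def GM : Matrix (Fin n) (Fin n) ℝ := Matrix.of fun i j => g (b i) (b j)

lemma ginv_eq : ginv n b g = (GM n b g)⁻¹ := rfl

lemma GM_isUnit (hgb : IsBilin g) (hgs : ∀ x y, g x y = g y x)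
    (hgnd : ∀ x : V, (∀ y : V, g x y = 0) → x = 0) : IsUnit (GM n b g) := by
  rw [← Matrix.mulVec_injective_iff_isUnit]
  have key : ∀ w : Fin n → ℝ, (GM n b g).mulVec w = 0 → w = 0 := by
    intro w hw
    set x : V := ∑ j, w j • b j with hx
    have hgx : ∀ i, g (b i) x = 0 := by
      intro i
      have : g (b i) x = ∑ j, w j * g (b i) (b j) := lin_sum (hgb.2 (b i)) _ _ _
      have h2 := congrFun hw i
      simp only [Matrix.mulVec, dotProduct, GM, Matrix.of_apply, Pi.zero_apply] at h2
      rw [this]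
      rw [← h2]
      exact Finset.sum_congr rfl fun j _ => mul_comm _ _
    have hx0 : x = 0 := by
      apply hgnd
      intro y
      have hy : g y x = 0 := by
        conv_lhs => rw [← b.sum_repr y]
        rw [lin_sum (hgb.1 x) _ _ _]
        simp [hgx]
      rw [hgs]; exact hy
    have := Fintype.linearIndependent_iff.mp b.linearIndependent w (by rw [← hx, hx0])
    funext i; exact this i
  intro u v huv
  have : (GM n b g).mulVec (u - v) = 0 := by
    rw [Matrix.mulVec_sub, huv, sub_self]
  have := key _ this
  exact sub_eq_zero.mp this

lemma ginv_symm (hgs : ∀ x y, g x y = g y x) (i j : Fin n) :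
    ginv n b g i j = ginv n b g j i := by
  have hGT : Matrix.transpose (GM n b g) = GM n b g := by
    ext i j; simp [GM, Matrix.transpose_apply, hgs]
  have : Matrix.transpose ((GM n b g)⁻¹) = (GM n b g)⁻¹ := by
    rw [Matrix.transpose_nonsing_inv, hGT]
  rw [ginv_eq]
  conv_lhs => rw [← this]
  rfl

lemma ginv_mul (hgb : IsBilin g) (hgs : ∀ x y, g x y = g y x)
    (hgnd : ∀ x : V, (∀ y : V, g x y = 0) → x = 0) (j k : Fin n) :
    ∑ i, ginv n b g i j * g (b i) (b k) = if j = k then 1 else 0 := by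
  have hu : IsUnit (GM n b g).det :=
    (Matrix.isUnit_iff_isUnit_det _).mp (GM_isUnit n b g hgb hgs hgnd)
  have h1 : (GM n b g)⁻¹ * GM n b g = 1 := Matrix.nonsing_inv_mul _ hu
  have h2 := congrFun (congrFun h1 j) k
  rw [Matrix.mul_apply, Matrix.one_apply] at h2
  rw [← h2]
  refine Finset.sum_congr rfl fun i _ => ?_
  rw [ginv_symm n b g hgs]
  rfl

/-- Contraction lemma, version A. -/
lemma contractA (hgb : IsBilin g) (hgs : ∀ x y, g x y = g y x)
    (hgnd : ∀ x : V, (∀ y : V, g x y = 0) → x = 0)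
    (f : V → ℝ) (hf : IsLin f) (x : V) :
    ∑ i, ∑ j, ginv n b g i j * g (b i) x * f (b j) = f x := by
  have hx : ∀ i : Fin n, g (b i) x = ∑ k, b.repr x k * g (b i) (b k) := by
    intro i
    conv_lhs => rw [← b.sum_repr x]
    exact lin_sum (hgb.2 (b i)) _ _ _
  calc ∑ i, ∑ j, ginv n b g i j * g (b i) x * f (b j)
      = ∑ j, ∑ k, (∑ i, ginv n b g i j * g (b i) (b k)) * (b.repr x k * f (b j)) := by
        rw [Finset.sum_comm]
        refine Finset.sum_congr rfl fun j _ => ?_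
        have e1 : ∀ i : Fin n, ginv n b g i j * g (b i) x * f (b j)
            = ∑ k, ginv n b g i j * g (b i) (b k) * (b.repr x k * f (b j)) := by
          intro i
          rw [hx i, Finset.mul_sum, Finset.sum_mul]
          exact Finset.sum_congr rfl fun k _ => by ring
        simp only [e1]
        rw [Finset.sum_comm]
        exact Finset.sum_congr rfl fun k _ => by rw [Finset.sum_mul]
    _ = ∑ j, b.repr x j * f (b j) := by
        refine Finset.sum_congr rfl fun j _ => ?_
        simp only [ginv_mul n b g hgb hgs hgnd]
        simp
    _ = f x := by
        rw [← lin_sum hf, b.sum_repr]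

/-- Contraction lemma, version B. -/
lemma contractB (hgb : IsBilin g) (hgs : ∀ x y, g x y = g y x)
    (hgnd : ∀ x : V, (∀ y : V, g x y = 0) → x = 0)
    (f : V → ℝ) (hf : IsLin f) (x : V) :
    ∑ i, ∑ j, ginv n b g i j * g (b j) x * f (b i) = f x := by
  rw [Finset.sum_comm]
  rw [← contractA n b g hgb hgs hgnd f hf x]
  refine Finset.sum_congr rfl fun i _ => Finset.sum_congr rfl fun j _ => ?_
  rw [ginv_symm n b g hgs]

/-- Trace of g is n. -/
lemma trg_g (hgb : IsBilin g) (hgs : ∀ x y, g x y = g y x)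
    (hgnd : ∀ x : V, (∀ y : V, g x y = 0) → x = 0) :
    trg n b g g = n := by
  unfold trg
  rw [Finset.sum_comm]
  have : ∀ j : Fin n, ∑ i, ginv n b g i j * g (b i) (b j) = 1 := by
    intro j
    rw [ginv_mul n b g hgb hgs hgnd j j]
    simp
  simp [this]

end Aux


section Aux2

variable {V : Type*} [AddCommGroup V] [Module ℝ V]
variable (n : ℕ) (b : Module.Basis (Fin n) ℝ V) (g : V → V → ℝ)

lemma relabel (hgs : ∀ x y, g x y = g y x) (φ : Fin n → Fin n → ℝ) :
    ∑ i, ∑ j, ginv n b g i j * φ i j = ∑ i, ∑ j, ginv n b g i j * φ j i := by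
  rw [Finset.sum_comm]
  exact Finset.sum_congr rfl fun i _ => Finset.sum_congr rfl fun j _ => by
    rw [ginv_symm n b g hgs]

/-- con1 : f in slot i, g x in slot j. -/
lemma con1 (hgb : IsBilin g) (hgs : ∀ x y, g x y = g y x)
    (hgnd : ∀ x : V, (∀ y : V, g x y = 0) → x = 0)
    (f : V → ℝ) (hf : IsLin f) (x : V) :
    ∑ i, ∑ j, ginv n b g i j * f (b i) * g x (b j) = f x := by
  have h := contractB n b g hgb hgs hgnd f hf x
  rw [← h]
  refine Finset.sum_congr rfl fun i _ => Finset.sum_congr rfl fun j _ => ?_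
  rw [hgs x (b j)]; ring

/-- con2 : f in slot j, g x in slot i. -/
lemma con2 (hgb : IsBilin g) (hgs : ∀ x y, g x y = g y x)
    (hgnd : ∀ x : V, (∀ y : V, g x y = 0) → x = 0)
    (f : V → ℝ) (hf : IsLin f) (x : V) :
    ∑ i, ∑ j, ginv n b g i j * f (b j) * g (b i) x = f x := by
  have h := contractA n b g hgb hgs hgnd f hf x
  rw [← h]
  refine Finset.sum_congr rfl fun i _ => Finset.sum_congr rfl fun j _ => ?_
  ring

/-- con3 : f in slot i, g (b j) x. -/
lemma con3 (hgb : IsBilin g) (hgs : ∀ x y, g x y = g y x)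
    (hgnd : ∀ x : V, (∀ y : V, g x y = 0) → x = 0)
    (f : V → ℝ) (hf : IsLin f) (x : V) :
    ∑ i, ∑ j, ginv n b g i j * f (b i) * g (b j) x = f x := by
  have h := contractB n b g hgb hgs hgnd f hf x
  rw [← h]
  refine Finset.sum_congr rfl fun i _ => Finset.sum_congr rfl fun j _ => ?_
  ring

lemma dsum2 (p q : ℝ) (A B : Fin n → Fin n → ℝ) :
    ∑ i, ∑ j, (p * A i j + q * B i j)
      = p * (∑ i, ∑ j, A i j) + q * (∑ i, ∑ j, B i j) := by
  simp only [Finset.sum_add_distrib, ← Finset.mul_sum]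

lemma dsum4 (p q r s : ℝ) (A B C D : Fin n → Fin n → ℝ) :
    ∑ i, ∑ j, (p * A i j + q * B i j + r * C i j + s * D i j)
      = p * (∑ i, ∑ j, A i j) + q * (∑ i, ∑ j, B i j) + r * (∑ i, ∑ j, C i j)
        + s * (∑ i, ∑ j, D i j) := by
  simp only [Finset.sum_add_distrib, ← Finset.mul_sum]

lemma dsum6 (p q r s u v : ℝ) (A B C D E K : Fin n → Fin n → ℝ) :
    ∑ i, ∑ j, (p * A i j + q * B i j + r * C i j + s * D i j + u * E i j + v * K i j)
      = p * (∑ i, ∑ j, A i j) + q * (∑ i, ∑ j, B i j) + r * (∑ i, ∑ j, C i j)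
        + s * (∑ i, ∑ j, D i j) + u * (∑ i, ∑ j, E i j) + v * (∑ i, ∑ j, K i j) := by
  simp only [Finset.sum_add_distrib, ← Finset.mul_sum]

/-- Ric of wedge t h g. -/
lemma Ric_wedge (hgb : IsBilin g) (hgs : ∀ x y, g x y = g y x)
    (hgnd : ∀ x : V, (∀ y : V, g x y = 0) → x = 0)
    (t : ℝ) (h : V → V → ℝ) (hh : IsBilin h) (x y : V) :
    Ric n b g (wedge t h g) x y
      = (1 - n + t) * h x y - t * trg n b g h * g x y := by
  show ∑ i, ∑ j, ginv n b g i j * wedge t h g (b i) x y (b j) = _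
  have e : ∀ i j : Fin n, ginv n b g i j * wedge t h g (b i) x y (b j)
      = 1 * (ginv n b g i j * h (b i) y * g x (b j))
        + (-(h x y)) * (ginv n b g i j * g (b i) (b j))
        + (-(t * g x y)) * (ginv n b g i j * h (b i) (b j))
        + t * (ginv n b g i j * h x (b j) * g (b i) y) := by
    intro i j; simp only [wedge]; ring
  simp only [e]
  rw [dsum4]
  have c1 : ∑ i, ∑ j, ginv n b g i j * h (b i) y * g x (b j) = h x y :=
    con1 n b g hgb hgs hgnd (fun v => h v y) (hh.1 y) x
  have cB : (∑ i, ∑ j, ginv n b g i j * g (b i) (b j)) = (n : ℝ) :=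
    trg_g n b g hgb hgs hgnd
  have cC : (∑ i, ∑ j, ginv n b g i j * h (b i) (b j)) = trg n b g h := rfl
  have c4 : ∑ i, ∑ j, ginv n b g i j * h x (b j) * g (b i) y = h x y :=
    con2 n b g hgb hgs hgnd (fun v => h x v) (hh.2 x) y
  rw [c1, cB, cC, c4]
  ring

/-- RicS of wedge t h g. -/
lemma RicS_wedge (hgb : IsBilin g) (hgs : ∀ x y, g x y = g y x)
    (hgnd : ∀ x : V, (∀ y : V, g x y = 0) → x = 0)
    (t : ℝ) (h : V → V → ℝ) (hh : IsBilin h) (x y : V) :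
    RicS n b g (wedge t h g) x y
      = (1 - t * ((n : ℝ) - 1)) * h x y - trg n b g h * g x y := by
  show ∑ i, ∑ j, ginv n b g i j * wedge t h g x (b i) (b j) y = _
  have e : ∀ i j : Fin n, ginv n b g i j * wedge t h g x (b i) (b j) y
      = 1 * (ginv n b g i j * h x (b j) * g (b i) y)
        + (-(g x y)) * (ginv n b g i j * h (b i) (b j))
        + (-(t * h x y)) * (ginv n b g i j * g (b i) (b j))
        + t * (ginv n b g i j * h (b i) y * g x (b j)) := by
    intro i j; simp only [wedge]; ring
  simp only [e]
  rw [dsum4]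
  have c1 : ∑ i, ∑ j, ginv n b g i j * h x (b j) * g (b i) y = h x y :=
    con2 n b g hgb hgs hgnd (fun v => h x v) (hh.2 x) y
  have cB : (∑ i, ∑ j, ginv n b g i j * h (b i) (b j)) = trg n b g h := rfl
  have cC : (∑ i, ∑ j, ginv n b g i j * g (b i) (b j)) = (n : ℝ) :=
    trg_g n b g hgb hgs hgnd
  have c4 : ∑ i, ∑ j, ginv n b g i j * h (b i) y * g x (b j) = h x y :=
    con1 n b g hgb hgs hgnd (fun v => h v y) (hh.1 y) x
  rw [c1, cB, cC, c4]
  ring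

/-- Ric of prodB h g. -/
lemma Ric_prodB (hgb : IsBilin g) (hgs : ∀ x y, g x y = g y x)
    (hgnd : ∀ x : V, (∀ y : V, g x y = 0) → x = 0)
    (h : V → V → ℝ) (hh : IsBilin h) (x y : V) :
    Ric n b g (prodB h g) x y = h y x := by
  show ∑ i, ∑ j, ginv n b g i j * (h (b i) x * g y (b j)) = _
  have e : ∀ i j : Fin n, ginv n b g i j * (h (b i) x * g y (b j))
      = ginv n b g i j * h (b i) x * g y (b j) := by intro i j; ring
  simp only [e]
  exact con1 n b g hgb hgs hgnd (fun v => h v x) (hh.1 x) y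

/-- RicS of prodB h g. -/
lemma RicS_prodB (hgb : IsBilin g) (hgs : ∀ x y, g x y = g y x)
    (hgnd : ∀ x : V, (∀ y : V, g x y = 0) → x = 0)
    (h : V → V → ℝ) (hh : IsBilin h) (x y : V) :
    RicS n b g (prodB h g) x y = h x y := by
  show ∑ i, ∑ j, ginv n b g i j * (h x (b i) * g (b j) y) = _
  have e : ∀ i j : Fin n, ginv n b g i j * (h x (b i) * g (b j) y)
      = ginv n b g i j * h x (b i) * g (b j) y := by intro i j; ring
  simp only [e]
  exact con3 n b g hgb hgs hgnd (fun v => h x v) (hh.2 x) y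

end Aux2

section Aux3

variable {V : Type*} [AddCommGroup V] [Module ℝ V]
variable (n : ℕ) (b : Module.Basis (Fin n) ℝ V) (g : V → V → ℝ)

/-- D5: contraction of the first two slots vanishes. -/
lemma sumD5 (hgs : ∀ x y, g x y = g y x) (F : V → V → V → V → ℝ)
    (ha : ∀ x y z w, F x y z w = - F y x z w) (x y : V) :
    ∑ i, ∑ j, ginv n b g i j * F (b i) (b j) x y = 0 := by
  have h1 : ∑ i, ∑ j, ginv n b g i j * F (b i) (b j) x y
      = ∑ i, ∑ j, ginv n b g i j * F (b j) (b i) x y :=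
    relabel n b g hgs fun i j => F (b i) (b j) x y
  have h2 : ∑ i, ∑ j, ginv n b g i j * F (b j) (b i) x y
      = -∑ i, ∑ j, ginv n b g i j * F (b i) (b j) x y := by
    rw [← Finset.sum_neg_distrib]
    refine Finset.sum_congr rfl fun i _ => ?_
    rw [← Finset.sum_neg_distrib]
    refine Finset.sum_congr rfl fun j _ => ?_
    rw [ha (b j) (b i)]; ring
  have := h1.trans h2
  linarith

/-- D3. -/
lemma sumD3 (hgs : ∀ x y, g x y = g y x) (F : V → V → V → V → ℝ) (x y : V) :
    ∑ i, ∑ j, ginv n b g i j * F (b j) x y (b i) = Ric n b g F x y := by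
  have h1 : ∑ i, ∑ j, ginv n b g i j * F (b j) x y (b i)
      = ∑ i, ∑ j, ginv n b g i j * F (b i) x y (b j) :=
    relabel n b g hgs fun i j => F (b j) x y (b i)
  rw [h1]; rfl

/-- D4. -/
lemma sumD4 (hgs : ∀ x y, g x y = g y x) (F : V → V → V → V → ℝ) (x y : V) :
    ∑ i, ∑ j, ginv n b g i j * F y (b j) (b i) x = RicS n b g F y x := by
  have h1 : ∑ i, ∑ j, ginv n b g i j * F y (b j) (b i) x
      = ∑ i, ∑ j, ginv n b g i j * F y (b i) (b j) x :=
    relabel n b g hgs fun i j => F y (b j) (b i) x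
  rw [h1]; rfl

/-- D6. -/
lemma sumD6 (F : V → V → V → V → ℝ)
    (ha : ∀ x y z w, F x y z w = - F y x z w) (x y : V) :
    ∑ i, ∑ j, ginv n b g i j * F x (b i) y (b j) = - Ric n b g F x y := by
  have e : ∀ i j : Fin n, ginv n b g i j * F x (b i) y (b j)
      = -(ginv n b g i j * F (b i) x y (b j)) := by
    intro i j; rw [ha x (b i)]; ring
  simp only [e, Finset.sum_neg_distrib]
  rfl

/-- D7. -/
lemma sumD7 (hgs : ∀ x y, g x y = g y x) (F : V → V → V → V → ℝ)
    (ha : ∀ x y z w, F x y z w = - F y x z w) (x y : V) :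
    ∑ i, ∑ j, ginv n b g i j * F x (b j) y (b i) = - Ric n b g F x y := by
  have h1 : ∑ i, ∑ j, ginv n b g i j * F x (b j) y (b i)
      = ∑ i, ∑ j, ginv n b g i j * F x (b i) y (b j) :=
    relabel n b g hgs fun i j => F x (b j) y (b i)
  rw [h1]; exact sumD6 n b g F ha x y

/-- D8. -/
lemma sumD8 (hgs : ∀ x y, g x y = g y x) (F : V → V → V → V → ℝ)
    (ha : ∀ x y z w, F x y z w = - F y x z w)
    (hb : ∀ x y z w, F x y z w + F y z x w + F z x y w = 0) (x y : V) :
    ∑ i, ∑ j, ginv n b g i j * F (b i) x (b j) y = - RicS n b g F x y := by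
  have e : ∀ i j : Fin n, ginv n b g i j * F (b i) x (b j) y
      = -(ginv n b g i j * F x (b j) (b i) y) + -(ginv n b g i j * F (b j) (b i) x y) := by
    intro i j
    have h := hb (b i) x (b j) y
    have h2 : F (b i) x (b j) y = - F x (b j) (b i) y - F (b j) (b i) x y := by linarith
    rw [h2]; ring
  simp only [e, Finset.sum_add_distrib, Finset.sum_neg_distrib]
  have r1 : ∑ i, ∑ j, ginv n b g i j * F x (b j) (b i) y
      = ∑ i, ∑ j, ginv n b g i j * F x (b i) (b j) y :=
    relabel n b g hgs fun i j => F x (b j) (b i) y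
  have r2 : ∑ i, ∑ j, ginv n b g i j * F (b j) (b i) x y
      = ∑ i, ∑ j, ginv n b g i j * F (b i) (b j) x y :=
    relabel n b g hgs fun i j => F (b j) (b i) x y
  rw [r1, r2, sumD5 n b g hgs F ha x y, neg_zero, add_zero]
  rfl

/-- D9. -/
lemma sumD9 (F : V → V → V → V → ℝ)
    (ha : ∀ x y z w, F x y z w = - F y x z w)
    (hb : ∀ x y z w, F x y z w + F y z x w + F z x y w = 0) (x y : V) :
    ∑ i, ∑ j, ginv n b g i j * F x y (b i) (b j)
      = Ric n b g F y x - Ric n b g F x y := by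
  have e : ∀ i j : Fin n, ginv n b g i j * F x y (b i) (b j)
      = ginv n b g i j * F (b i) y x (b j) - ginv n b g i j * F (b i) x y (b j) := by
    intro i j
    have h := hb x y (b i) (b j)
    have h3 : F y (b i) x (b j) = - F (b i) y x (b j) := ha y (b i) x (b j)
    have h2 : F x y (b i) (b j) = F (b i) y x (b j) - F (b i) x y (b j) := by linarith
    rw [h2]; ring
  simp only [e, Finset.sum_sub_distrib]
  rfl

/-- D10. -/
lemma sumD10 (hgs : ∀ x y, g x y = g y x) (F : V → V → V → V → ℝ)
    (ha : ∀ x y z w, F x y z w = - F y x z w)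
    (hb : ∀ x y z w, F x y z w + F y z x w + F z x y w = 0) (x y : V) :
    ∑ i, ∑ j, ginv n b g i j * F x y (b j) (b i)
      = Ric n b g F y x - Ric n b g F x y := by
  have h1 : ∑ i, ∑ j, ginv n b g i j * F x y (b j) (b i)
      = ∑ i, ∑ j, ginv n b g i j * F x y (b i) (b j) :=
    relabel n b g hgs fun i j => F x y (b j) (b i)
  rw [h1]; exact sumD9 n b g F ha hb x y

/-- D11. -/
lemma sumD11 (hgs : ∀ x y, g x y = g y x) (F : V → V → V → V → ℝ)
    (ha : ∀ x y z w, F x y z w = - F y x z w) (x y : V) :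
    ∑ i, ∑ j, ginv n b g i j * F (b j) (b i) x y = 0 := by
  have h1 : ∑ i, ∑ j, ginv n b g i j * F (b j) (b i) x y
      = ∑ i, ∑ j, ginv n b g i j * F (b i) (b j) x y :=
    relabel n b g hgs fun i j => F (b j) (b i) x y
  rw [h1]; exact sumD5 n b g hgs F ha x y

/-- Ric of psi F. -/
lemma Ric_psi (hgs : ∀ x y, g x y = g y x) (F : V → V → V → V → ℝ) (x y : V) :
    Ric n b g (psi F) x y
      = (Ric n b g F x y + Ric n b g F y x + RicS n b g F x y + RicS n b g F y x) / 4 := by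
  show ∑ i, ∑ j, ginv n b g i j * psi F (b i) x y (b j) = _
  have e : ∀ i j : Fin n, ginv n b g i j * psi F (b i) x y (b j)
      = (1/4 : ℝ) * (ginv n b g i j * F (b i) x y (b j))
        + (1/4 : ℝ) * (ginv n b g i j * F x (b i) (b j) y)
        + (1/4 : ℝ) * (ginv n b g i j * F y (b j) (b i) x)
        + (1/4 : ℝ) * (ginv n b g i j * F (b j) y x (b i)) := by
    intro i j; simp only [psi]; ring
  simp only [e]
  rw [dsum4]
  have c1 : (∑ i, ∑ j, ginv n b g i j * F (b i) x y (b j)) = Ric n b g F x y := rfl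
  have c2 : (∑ i, ∑ j, ginv n b g i j * F x (b i) (b j) y) = RicS n b g F x y := rfl
  rw [c1, c2, sumD4 n b g hgs F x y, sumD3 n b g hgs F y x]
  ring

/-- RicS of psi F. -/
lemma RicS_psi (hgs : ∀ x y, g x y = g y x) (F : V → V → V → V → ℝ) (x y : V) :
    RicS n b g (psi F) x y
      = (Ric n b g F x y + Ric n b g F y x + RicS n b g F x y + RicS n b g F y x) / 4 := by
  show ∑ i, ∑ j, ginv n b g i j * psi F x (b i) (b j) y = _
  have e : ∀ i j : Fin n, ginv n b g i j * psi F x (b i) (b j) y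
      = (1/4 : ℝ) * (ginv n b g i j * F x (b i) (b j) y)
        + (1/4 : ℝ) * (ginv n b g i j * F (b i) x y (b j))
        + (1/4 : ℝ) * (ginv n b g i j * F (b j) y x (b i))
        + (1/4 : ℝ) * (ginv n b g i j * F y (b j) (b i) x) := by
    intro i j; simp only [psi]; ring
  simp only [e]
  rw [dsum4]
  have c1 : (∑ i, ∑ j, ginv n b g i j * F x (b i) (b j) y) = RicS n b g F x y := rfl
  have c2 : (∑ i, ∑ j, ginv n b g i j * F (b i) x y (b j)) = Ric n b g F x y := rfl
  rw [c1, c2, sumD3 n b g hgs F y x, sumD4 n b g hgs F x y]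
  ring

/-- Ric of mu F. -/
lemma Ric_mu (hgs : ∀ x y, g x y = g y x) (F : V → V → V → V → ℝ)
    (ha : ∀ x y z w, F x y z w = - F y x z w)
    (hb : ∀ x y z w, F x y z w + F y z x w + F z x y w = 0) (x y : V) :
    Ric n b g (mu F) x y
      = (5 * Ric n b g F x y - Ric n b g F y x - 3 * RicS n b g F x y
          - RicS n b g F y x) / 8 := by
  show ∑ i, ∑ j, ginv n b g i j * mu F (b i) x y (b j) = _
  have e : ∀ i j : Fin n, ginv n b g i j * mu F (b i) x y (b j)
      = (3/8 : ℝ) * (ginv n b g i j * F (b i) x y (b j))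
        + (3/8 : ℝ) * (ginv n b g i j * F (b i) x (b j) y)
        + (1/8 : ℝ) * (ginv n b g i j * F (b i) (b j) y x)
        + (1/8 : ℝ) * (ginv n b g i j * F (b i) y (b j) x)
        + (1/8 : ℝ) * (ginv n b g i j * F (b j) x y (b i))
        + (1/8 : ℝ) * (ginv n b g i j * F y x (b j) (b i)) := by
    intro i j; simp only [mu]; ring
  simp only [e]
  rw [dsum6]
  have c1 : (∑ i, ∑ j, ginv n b g i j * F (b i) x y (b j)) = Ric n b g F x y := rfl
  rw [c1, sumD8 n b g hgs F ha hb x y, sumD5 n b g hgs F ha y x,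
    sumD8 n b g hgs F ha hb y x, sumD3 n b g hgs F x y, sumD10 n b g hgs F ha hb y x]
  ring

/-- RicS of mu F. -/
lemma RicS_mu (hgs : ∀ x y, g x y = g y x) (F : V → V → V → V → ℝ)
    (ha : ∀ x y z w, F x y z w = - F y x z w)
    (hb : ∀ x y z w, F x y z w + F y z x w + F z x y w = 0) (x y : V) :
    RicS n b g (mu F) x y
      = (-5 * Ric n b g F x y + Ric n b g F y x + 3 * RicS n b g F x y
          + RicS n b g F y x) / 8 := by
  show ∑ i, ∑ j, ginv n b g i j * mu F x (b i) (b j) y = _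
  have e : ∀ i j : Fin n, ginv n b g i j * mu F x (b i) (b j) y
      = (3/8 : ℝ) * (ginv n b g i j * F x (b i) (b j) y)
        + (3/8 : ℝ) * (ginv n b g i j * F x (b i) y (b j))
        + (1/8 : ℝ) * (ginv n b g i j * F x y (b j) (b i))
        + (1/8 : ℝ) * (ginv n b g i j * F x (b j) y (b i))
        + (1/8 : ℝ) * (ginv n b g i j * F y (b i) (b j) x)
        + (1/8 : ℝ) * (ginv n b g i j * F (b j) (b i) y x) := by
    intro i j; simp only [mu]; ring
  simp only [e]
  rw [dsum6]
  have c1 : (∑ i, ∑ j, ginv n b g i j * F x (b i) (b j) y) = RicS n b g F x y := rfl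
  have c5 : (∑ i, ∑ j, ginv n b g i j * F y (b i) (b j) x) = RicS n b g F y x := rfl
  rw [c1, c5, sumD6 n b g F ha x y, sumD10 n b g hgs F ha hb x y,
    sumD7 n b g hgs F ha x y, sumD11 n b g hgs F ha y x]
  ring

end Aux3



section Aux4

variable {V : Type*} [AddCommGroup V] [Module ℝ V]
variable (n : ℕ) (b : Module.Basis (Fin n) ℝ V) (g : V → V → ℝ)

lemma dsum1 (c : ℝ) (A : Fin n → Fin n → ℝ) :
    ∑ i, ∑ j, c * A i j = c * ∑ i, ∑ j, A i j := by
  simp only [← Finset.mul_sum]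

/-- Pointwise linearity of Ric. -/
lemma Ric_add_pt (T T' : V → V → V → V → ℝ) (x y : V) :
    Ric n b g (T + T') x y = Ric n b g T x y + Ric n b g T' x y := by
  show ∑ i, ∑ j, ginv n b g i j * (T + T') (b i) x y (b j) = _
  have e : ∀ i j : Fin n, ginv n b g i j * (T + T') (b i) x y (b j)
      = ginv n b g i j * T (b i) x y (b j) + ginv n b g i j * T' (b i) x y (b j) := by
    intro i j; simp only [Pi.add_apply]; ring
  simp only [e, Finset.sum_add_distrib]
  rfl

lemma Ric_sub_pt (T T' : V → V → V → V → ℝ) (x y : V) :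
    Ric n b g (T - T') x y = Ric n b g T x y - Ric n b g T' x y := by
  show ∑ i, ∑ j, ginv n b g i j * (T - T') (b i) x y (b j) = _
  have e : ∀ i j : Fin n, ginv n b g i j * (T - T') (b i) x y (b j)
      = ginv n b g i j * T (b i) x y (b j) - ginv n b g i j * T' (b i) x y (b j) := by
    intro i j; simp only [Pi.sub_apply]; ring
  simp only [e, Finset.sum_sub_distrib]
  rfl

lemma Ric_smul_pt (c : ℝ) (T : V → V → V → V → ℝ) (x y : V) :
    Ric n b g (c • T) x y = c * Ric n b g T x y := by
  show ∑ i, ∑ j, ginv n b g i j * (c • T) (b i) x y (b j) = _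
  have e : ∀ i j : Fin n, ginv n b g i j * (c • T) (b i) x y (b j)
      = c * (ginv n b g i j * T (b i) x y (b j)) := by
    intro i j; simp only [Pi.smul_apply, smul_eq_mul]; ring
  simp only [e]
  rw [dsum1]
  rfl

lemma RicS_add_pt (T T' : V → V → V → V → ℝ) (x y : V) :
    RicS n b g (T + T') x y = RicS n b g T x y + RicS n b g T' x y := by
  show ∑ i, ∑ j, ginv n b g i j * (T + T') x (b i) (b j) y = _
  have e : ∀ i j : Fin n, ginv n b g i j * (T + T') x (b i) (b j) y
      = ginv n b g i j * T x (b i) (b j) y + ginv n b g i j * T' x (b i) (b j) y := by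
    intro i j; simp only [Pi.add_apply]; ring
  simp only [e, Finset.sum_add_distrib]
  rfl

lemma RicS_sub_pt (T T' : V → V → V → V → ℝ) (x y : V) :
    RicS n b g (T - T') x y = RicS n b g T x y - RicS n b g T' x y := by
  show ∑ i, ∑ j, ginv n b g i j * (T - T') x (b i) (b j) y = _
  have e : ∀ i j : Fin n, ginv n b g i j * (T - T') x (b i) (b j) y
      = ginv n b g i j * T x (b i) (b j) y - ginv n b g i j * T' x (b i) (b j) y := by
    intro i j; simp only [Pi.sub_apply]; ring
  simp only [e, Finset.sum_sub_distrib]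
  rfl

lemma RicS_smul_pt (c : ℝ) (T : V → V → V → V → ℝ) (x y : V) :
    RicS n b g (c • T) x y = c * RicS n b g T x y := by
  show ∑ i, ∑ j, ginv n b g i j * (c • T) x (b i) (b j) y = _
  have e : ∀ i j : Fin n, ginv n b g i j * (c • T) x (b i) (b j) y
      = c * (ginv n b g i j * T x (b i) (b j) y) := by
    intro i j; simp only [Pi.smul_apply, smul_eq_mul]; ring
  simp only [e]
  rw [dsum1]
  rfl

/-- trg of a pointwise combination. -/
lemma trg_pt (f k m : V → V → ℝ) (c d : ℝ)
    (hf : ∀ x y, f x y = c * k x y + d * m x y) :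
    trg n b g f = c * trg n b g k + d * trg n b g m := by
  show ∑ i, ∑ j, ginv n b g i j * f (b i) (b j) = _
  have e : ∀ i j : Fin n, ginv n b g i j * f (b i) (b j)
      = c * (ginv n b g i j * k (b i) (b j)) + d * (ginv n b g i j * m (b i) (b j)) := by
    intro i j; rw [hf]; ring
  simp only [e]
  rw [dsum2]
  rfl

lemma trg_lamB (hgs : ∀ x y, g x y = g y x) (h : V → V → ℝ) :
    trg n b g (lamB h) = 0 := by
  show ∑ i, ∑ j, ginv n b g i j * lamB h (b i) (b j) = 0
  have e : ∀ i j : Fin n, ginv n b g i j * lamB h (b i) (b j)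
      = (1/2 : ℝ) * (ginv n b g i j * h (b i) (b j))
        + (-(1/2) : ℝ) * (ginv n b g i j * h (b j) (b i)) := by
    intro i j; simp only [lamB]; ring
  simp only [e]
  rw [dsum2]
  have r : ∑ i, ∑ j, ginv n b g i j * h (b j) (b i)
      = ∑ i, ∑ j, ginv n b g i j * h (b i) (b j) :=
    relabel n b g hgs fun i j => h (b j) (b i)
  rw [r]; ring

lemma trg_symB (hgs : ∀ x y, g x y = g y x) (h : V → V → ℝ) :
    trg n b g (symB h) = trg n b g h := by
  show ∑ i, ∑ j, ginv n b g i j * symB h (b i) (b j) = _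
  have e : ∀ i j : Fin n, ginv n b g i j * symB h (b i) (b j)
      = (1/2 : ℝ) * (ginv n b g i j * h (b i) (b j))
        + (1/2 : ℝ) * (ginv n b g i j * h (b j) (b i)) := by
    intro i j; simp only [symB]; ring
  simp only [e]
  rw [dsum2]
  have r : ∑ i, ∑ j, ginv n b g i j * h (b j) (b i)
      = ∑ i, ∑ j, ginv n b g i j * h (b i) (b j) :=
    relabel n b g hgs fun i j => h (b j) (b i)
  rw [r]
  have : trg n b g h = ∑ i, ∑ j, ginv n b g i j * h (b i) (b j) := rfl
  rw [this]; ring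

lemma sum_rot3 {M : Type*} [AddCommMonoid M] (G : Fin n → Fin n → Fin n → M) :
    ∑ k, ∑ l, ∑ i, G k l i = ∑ i, ∑ k, ∑ l, G k l i := by
  have h1 : ∀ k : Fin n, (∑ l, ∑ i, G k l i) = ∑ i, ∑ l, G k l i := fun k => Finset.sum_comm
  simp only [h1]
  exact Finset.sum_comm

lemma sum_rot3b {M : Type*} [AddCommMonoid M] (G : Fin n → Fin n → Fin n → M) :
    ∑ l, ∑ i, ∑ j, G l i j = ∑ i, ∑ j, ∑ l, G l i j := by
  rw [Finset.sum_comm]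
  exact Finset.sum_congr rfl fun i _ => Finset.sum_comm

lemma trg_Ric (F : V → V → V → V → ℝ) :
    trg n b g (Ric n b g F) = tau n b g F := by
  show (∑ k, ∑ l, ginv n b g k l * ∑ i, ∑ j, ginv n b g i j * F (b i) (b k) (b l) (b j))
      = ∑ i, ∑ k, ∑ l, ∑ j, ginv n b g i j * ginv n b g k l * F (b i) (b k) (b l) (b j)
  have e : ∀ k l : Fin n,
      ginv n b g k l * ∑ i, ∑ j, ginv n b g i j * F (b i) (b k) (b l) (b j)
        = ∑ i, ∑ j, ginv n b g k l * (ginv n b g i j * F (b i) (b k) (b l) (b j)) := by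
    intro k l
    rw [Finset.mul_sum]
    exact Finset.sum_congr rfl fun i _ => Finset.mul_sum _ _ _
  simp only [e]
  have r : (∑ k, ∑ l, ∑ i, ∑ j, ginv n b g k l * (ginv n b g i j * F (b i) (b k) (b l) (b j)))
      = ∑ i, ∑ k, ∑ l, ∑ j, ginv n b g k l * (ginv n b g i j * F (b i) (b k) (b l) (b j)) :=
    sum_rot3 n fun k l i => ∑ j, ginv n b g k l * (ginv n b g i j * F (b i) (b k) (b l) (b j))
  rw [r]
  refine Finset.sum_congr rfl fun i _ => Finset.sum_congr rfl fun k _ =>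
    Finset.sum_congr rfl fun l _ => Finset.sum_congr rfl fun j _ => by ring

lemma trg_RicS (F : V → V → V → V → ℝ) :
    trg n b g (RicS n b g F) = tau n b g F := by
  show (∑ k, ∑ l, ginv n b g k l * ∑ i, ∑ j, ginv n b g i j * F (b k) (b i) (b j) (b l))
      = ∑ k, ∑ i, ∑ j, ∑ l, ginv n b g k l * ginv n b g i j * F (b k) (b i) (b j) (b l)
  have e : ∀ k l : Fin n,
      ginv n b g k l * ∑ i, ∑ j, ginv n b g i j * F (b k) (b i) (b j) (b l)
        = ∑ i, ∑ j, ginv n b g k l * (ginv n b g i j * F (b k) (b i) (b j) (b l)) := by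
    intro k l
    rw [Finset.mul_sum]
    exact Finset.sum_congr rfl fun i _ => Finset.mul_sum _ _ _
  simp only [e]
  refine Finset.sum_congr rfl fun k _ => ?_
  have r : (∑ l, ∑ i, ∑ j, ginv n b g k l * (ginv n b g i j * F (b k) (b i) (b j) (b l)))
      = ∑ i, ∑ j, ∑ l, ginv n b g k l * (ginv n b g i j * F (b k) (b i) (b j) (b l)) :=
    sum_rot3b n fun l i j => ginv n b g k l * (ginv n b g i j * F (b k) (b i) (b j) (b l))
  rw [r]
  refine Finset.sum_congr rfl fun i _ => Finset.sum_congr rfl fun j _ =>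
    Finset.sum_congr rfl fun l _ => by ring

/-- Bilinearity of Ric. -/
lemma Ric_isBilin (F : V → V → V → V → ℝ) (hm : IsMulti4 F) :
    IsBilin (Ric n b g F) := by
  constructor
  · intro y
    constructor
    · intro x x'
      show Ric n b g F (x + x') y = _
      have e : ∀ i j : Fin n, ginv n b g i j * F (b i) (x + x') y (b j)
          = ginv n b g i j * F (b i) x y (b j) + ginv n b g i j * F (b i) x' y (b j) := by
        intro i j
        have h : F (b i) (x + x') y (b j) = F (b i) x y (b j) + F (b i) x' y (b j) :=
          (hm.2.1 (b i) y (b j)).1 x x'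
        rw [h]; ring
      show ∑ i, ∑ j, ginv n b g i j * F (b i) (x + x') y (b j) = _
      simp only [e, Finset.sum_add_distrib]
      rfl
    · intro c x
      show ∑ i, ∑ j, ginv n b g i j * F (b i) (c • x) y (b j) = _
      have e : ∀ i j : Fin n, ginv n b g i j * F (b i) (c • x) y (b j)
          = c * (ginv n b g i j * F (b i) x y (b j)) := by
        intro i j
        have h : F (b i) (c • x) y (b j) = c * F (b i) x y (b j) :=
          (hm.2.1 (b i) y (b j)).2 c x
        rw [h]; ring
      simp only [e]
      rw [dsum1]
      rfl
  · intro x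
    constructor
    · intro y y'
      show ∑ i, ∑ j, ginv n b g i j * F (b i) x (y + y') (b j) = _
      have e : ∀ i j : Fin n, ginv n b g i j * F (b i) x (y + y') (b j)
          = ginv n b g i j * F (b i) x y (b j) + ginv n b g i j * F (b i) x y' (b j) := by
        intro i j
        have h : F (b i) x (y + y') (b j) = F (b i) x y (b j) + F (b i) x y' (b j) :=
          (hm.2.2.1 (b i) x (b j)).1 y y'
        rw [h]; ring
      simp only [e, Finset.sum_add_distrib]
      rfl
    · intro c y
      show ∑ i, ∑ j, ginv n b g i j * F (b i) x (c • y) (b j) = _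
      have e : ∀ i j : Fin n, ginv n b g i j * F (b i) x (c • y) (b j)
          = c * (ginv n b g i j * F (b i) x y (b j)) := by
        intro i j
        have h : F (b i) x (c • y) (b j) = c * F (b i) x y (b j) :=
          (hm.2.2.1 (b i) x (b j)).2 c y
        rw [h]; ring
      simp only [e]
      rw [dsum1]
      rfl

/-- Bilinearity of RicS. -/
lemma RicS_isBilin (F : V → V → V → V → ℝ) (hm : IsMulti4 F) :
    IsBilin (RicS n b g F) := by
  constructor
  · intro y
    constructor
    · intro x x'
      show ∑ i, ∑ j, ginv n b g i j * F (x + x') (b i) (b j) y = _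
      have e : ∀ i j : Fin n, ginv n b g i j * F (x + x') (b i) (b j) y
          = ginv n b g i j * F x (b i) (b j) y + ginv n b g i j * F x' (b i) (b j) y := by
        intro i j
        have h : F (x + x') (b i) (b j) y = F x (b i) (b j) y + F x' (b i) (b j) y :=
          (hm.1 (b i) (b j) y).1 x x'
        rw [h]; ring
      simp only [e, Finset.sum_add_distrib]
      rfl
    · intro c x
      show ∑ i, ∑ j, ginv n b g i j * F (c • x) (b i) (b j) y = _
      have e : ∀ i j : Fin n, ginv n b g i j * F (c • x) (b i) (b j) y
          = c * (ginv n b g i j * F x (b i) (b j) y) := by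
        intro i j
        have h : F (c • x) (b i) (b j) y = c * F x (b i) (b j) y :=
          (hm.1 (b i) (b j) y).2 c x
        rw [h]; ring
      simp only [e]
      rw [dsum1]
      rfl
  · intro x
    constructor
    · intro y y'
      show ∑ i, ∑ j, ginv n b g i j * F x (b i) (b j) (y + y') = _
      have e : ∀ i j : Fin n, ginv n b g i j * F x (b i) (b j) (y + y')
          = ginv n b g i j * F x (b i) (b j) y + ginv n b g i j * F x (b i) (b j) y' := by
        intro i j
        have h : F x (b i) (b j) (y + y') = F x (b i) (b j) y + F x (b i) (b j) y' :=
          (hm.2.2.2 x (b i) (b j)).1 y y'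
        rw [h]; ring
      simp only [e, Finset.sum_add_distrib]
      rfl
    · intro c y
      show ∑ i, ∑ j, ginv n b g i j * F x (b i) (b j) (c • y) = _
      have e : ∀ i j : Fin n, ginv n b g i j * F x (b i) (b j) (c • y)
          = c * (ginv n b g i j * F x (b i) (b j) y) := by
        intro i j
        have h : F x (b i) (b j) (c • y) = c * F x (b i) (b j) y :=
          (hm.2.2.2 x (b i) (b j)).2 c y
        rw [h]; ring
      simp only [e]
      rw [dsum1]
      rfl

end Aux4

section Aux5

variable {V : Type*} [AddCommGroup V] [Module ℝ V]

lemma isBilin_add {P Q : V → V → ℝ} (hP : IsBilin P) (hQ : IsBilin Q) :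
    IsBilin (P + Q) := by
  constructor
  · intro y
    constructor
    · intro x x'
      show P (x + x') y + Q (x + x') y = P x y + Q x y + (P x' y + Q x' y)
      have h1 : P (x + x') y = P x y + P x' y := (hP.1 y).1 x x'
      have h2 : Q (x + x') y = Q x y + Q x' y := (hQ.1 y).1 x x'
      rw [h1, h2]; ring
    · intro c x
      show P (c • x) y + Q (c • x) y = c * (P x y + Q x y)
      have h1 : P (c • x) y = c * P x y := (hP.1 y).2 c x
      have h2 : Q (c • x) y = c * Q x y := (hQ.1 y).2 c x
      rw [h1, h2]; ring
  · intro x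
    constructor
    · intro y y'
      show P x (y + y') + Q x (y + y') = P x y + Q x y + (P x y' + Q x y')
      have h1 : P x (y + y') = P x y + P x y' := (hP.2 x).1 y y'
      have h2 : Q x (y + y') = Q x y + Q x y' := (hQ.2 x).1 y y'
      rw [h1, h2]; ring
    · intro c y
      show P x (c • y) + Q x (c • y) = c * (P x y + Q x y)
      have h1 : P x (c • y) = c * P x y := (hP.2 x).2 c y
      have h2 : Q x (c • y) = c * Q x y := (hQ.2 x).2 c y
      rw [h1, h2]; ring

lemma isBilin_sub {P Q : V → V → ℝ} (hP : IsBilin P) (hQ : IsBilin Q) :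
    IsBilin (P - Q) := by
  constructor
  · intro y
    constructor
    · intro x x'
      show P (x + x') y - Q (x + x') y = P x y - Q x y + (P x' y - Q x' y)
      have h1 : P (x + x') y = P x y + P x' y := (hP.1 y).1 x x'
      have h2 : Q (x + x') y = Q x y + Q x' y := (hQ.1 y).1 x x'
      rw [h1, h2]; ring
    · intro c x
      show P (c • x) y - Q (c • x) y = c * (P x y - Q x y)
      have h1 : P (c • x) y = c * P x y := (hP.1 y).2 c x
      have h2 : Q (c • x) y = c * Q x y := (hQ.1 y).2 c x
      rw [h1, h2]; ring
  · intro x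
    constructor
    · intro y y'
      show P x (y + y') - Q x (y + y') = P x y - Q x y + (P x y' - Q x y')
      have h1 : P x (y + y') = P x y + P x y' := (hP.2 x).1 y y'
      have h2 : Q x (y + y') = Q x y + Q x y' := (hQ.2 x).1 y y'
      rw [h1, h2]; ring
    · intro c y
      show P x (c • y) - Q x (c • y) = c * (P x y - Q x y)
      have h1 : P x (c • y) = c * P x y := (hP.2 x).2 c y
      have h2 : Q x (c • y) = c * Q x y := (hQ.2 x).2 c y
      rw [h1, h2]; ring

lemma isBilin_smul (c : ℝ) {P : V → V → ℝ} (hP : IsBilin P) :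
    IsBilin (c • P) := by
  constructor
  · intro y
    constructor
    · intro x x'
      show c * P (x + x') y = c * P x y + c * P x' y
      have h1 : P (x + x') y = P x y + P x' y := (hP.1 y).1 x x'
      rw [h1]; ring
    · intro d x
      show c * P (d • x) y = d * (c * P x y)
      have h1 : P (d • x) y = d * P x y := (hP.1 y).2 d x
      rw [h1]; ring
  · intro x
    constructor
    · intro y y'
      show c * P x (y + y') = c * P x y + c * P x y'
      have h1 : P x (y + y') = P x y + P x y' := (hP.2 x).1 y y'
      rw [h1]; ring
    · intro d y
      show c * P x (d • y) = d * (c * P x y)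
      have h1 : P x (d • y) = d * P x y := (hP.2 x).2 d y
      rw [h1]; ring

lemma isBilin_symB {P : V → V → ℝ} (hP : IsBilin P) : IsBilin (symB P) := by
  constructor
  · intro y
    constructor
    · intro x x'
      show (P (x + x') y + P y (x + x')) / 2 = (P x y + P y x) / 2 + (P x' y + P y x') / 2
      have h1 : P (x + x') y = P x y + P x' y := (hP.1 y).1 x x'
      have h2 : P y (x + x') = P y x + P y x' := (hP.2 y).1 x x'
      rw [h1, h2]; ring
    · intro c x
      show (P (c • x) y + P y (c • x)) / 2 = c * ((P x y + P y x) / 2)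
      have h1 : P (c • x) y = c * P x y := (hP.1 y).2 c x
      have h2 : P y (c • x) = c * P y x := (hP.2 y).2 c x
      rw [h1, h2]; ring
  · intro x
    constructor
    · intro y y'
      show (P x (y + y') + P (y + y') x) / 2 = (P x y + P y x) / 2 + (P x y' + P y' x) / 2
      have h1 : P x (y + y') = P x y + P x y' := (hP.2 x).1 y y'
      have h2 : P (y + y') x = P y x + P y' x := (hP.1 x).1 y y'
      rw [h1, h2]; ring
    · intro c y
      show (P x (c • y) + P (c • y) x) / 2 = c * ((P x y + P y x) / 2)
      have h1 : P x (c • y) = c * P x y := (hP.2 x).2 c y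
      have h2 : P (c • y) x = c * P y x := (hP.1 x).2 c y
      rw [h1, h2]; ring

lemma isBilin_lamB {P : V → V → ℝ} (hP : IsBilin P) : IsBilin (lamB P) := by
  constructor
  · intro y
    constructor
    · intro x x'
      show (P (x + x') y - P y (x + x')) / 2 = (P x y - P y x) / 2 + (P x' y - P y x') / 2
      have h1 : P (x + x') y = P x y + P x' y := (hP.1 y).1 x x'
      have h2 : P y (x + x') = P y x + P y x' := (hP.2 y).1 x x'
      rw [h1, h2]; ring
    · intro c x
      show (P (c • x) y - P y (c • x)) / 2 = c * ((P x y - P y x) / 2)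
      have h1 : P (c • x) y = c * P x y := (hP.1 y).2 c x
      have h2 : P y (c • x) = c * P y x := (hP.2 y).2 c x
      rw [h1, h2]; ring
  · intro x
    constructor
    · intro y y'
      show (P x (y + y') - P (y + y') x) / 2 = (P x y - P y x) / 2 + (P x y' - P y' x) / 2
      have h1 : P x (y + y') = P x y + P x y' := (hP.2 x).1 y y'
      have h2 : P (y + y') x = P y x + P y' x := (hP.1 x).1 y y'
      rw [h1, h2]; ring
    · intro c y
      show (P x (c • y) - P (c • y) x) / 2 = c * ((P x y - P y x) / 2)
      have h1 : P x (c • y) = c * P x y := (hP.2 x).2 c y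
      have h2 : P (c • y) x = c * P y x := (hP.1 x).2 c y
      rw [h1, h2]; ring

end Aux5

theorem stmt13 {V : Type*} [AddCommGroup V] [Module ℝ V]
    (n : ℕ) (hn : 3 ≤ n) (b : Module.Basis (Fin n) ℝ V)
    (g : V → V → ℝ) (hgb : IsBilin g) (hgs : ∀ x y, g x y = g y x)
    (hgnd : ∀ x : V, (∀ y : V, g x y = 0) → x = 0) :
    ∀ F ∈ rSet V,
      RicS n b g (al1 n b g F) = Ric n b g (al1 n b g F) ∧
      RicS n b g (al2 n b g F) = Ric n b g (al2 n b g F) ∧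
      RicS n b g (al3 n b g F) = - Ric n b g (al3 n b g F) ∧
      RicS n b g (al4 n b g F) = - Ric n b g (al4 n b g F) ∧
      RicS n b g (al5 n b g F) = (3 : ℝ) • Ric n b g (al5 n b g F) ∧
      RicS n b g (al6 n b g F) = 0 ∧ RicS n b g (al7 n b g F) = 0 ∧
      RicS n b g (al8 n b g F) = 0 ∧
      trg n b g (RicS n b g (al2 n b g F)) = 0 ∧ trg n b g (RicS n b g (al3 n b g F)) = 0 ∧
      trg n b g (RicS n b g (al4 n b g F)) = 0 ∧ trg n b g (RicS n b g (al5 n b g F)) = 0 ∧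
      trg n b g (RicS n b g (al6 n b g F)) = 0 ∧ trg n b g (RicS n b g (al7 n b g F)) = 0 ∧
      trg n b g (RicS n b g (al8 n b g F)) = 0 := by
  intro F hF
  obtain ⟨hm, ha, hb⟩ := hF
  have h3n : (3 : ℝ) ≤ (n : ℝ) := by exact_mod_cast hn
  have hn0 : (n : ℝ) ≠ 0 := ne_of_gt (by linarith)
  have hn1 : (n : ℝ) - 1 ≠ 0 := ne_of_gt (by linarith)
  have hn2 : (n : ℝ) - 2 ≠ 0 := ne_of_gt (by linarith)
  have hp2 : (n : ℝ) + 2 ≠ 0 := ne_of_gt (by linarith)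
  have hBR : IsBilin (Ric n b g F) := Ric_isBilin n b g F hm
  have hBRs : IsBilin (RicS n b g F) := RicS_isBilin n b g F hm
  have hB1 : IsBilin (symB (Ric n b g F + RicS n b g F)) := isBilin_symB (isBilin_add hBR hBRs)
  have hB2 : IsBilin (symB (Ric n b g F - RicS n b g F)) := isBilin_symB (isBilin_sub hBR hBRs)
  have hB3 : IsBilin (lamB ((3 : ℝ) • Ric n b g F - RicS n b g F)) :=
    isBilin_lamB (isBilin_sub (isBilin_smul (3 : ℝ) hBR) hBRs)
  have hB4 : IsBilin (lamB (Ric n b g F + RicS n b g F)) := isBilin_lamB (isBilin_add hBR hBRs)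
  have tg : trg n b g g = (n : ℝ) := trg_g n b g hgb hgs hgnd
  have th1 : trg n b g (symB (Ric n b g F + RicS n b g F)) = 2 * tau n b g F := by
    rw [trg_symB n b g hgs,
      trg_pt n b g (Ric n b g F + RicS n b g F) (Ric n b g F) (RicS n b g F) 1 1
        (fun x y => by simp only [Pi.add_apply]; ring),
      trg_Ric, trg_RicS]
    ring
  have th2 : trg n b g (symB (Ric n b g F - RicS n b g F)) = 0 := by
    rw [trg_symB n b g hgs,
      trg_pt n b g (Ric n b g F - RicS n b g F) (Ric n b g F) (RicS n b g F) 1 (-1)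
        (fun x y => by simp only [Pi.sub_apply]; ring),
      trg_Ric, trg_RicS]
    ring
  have tL3 : trg n b g (lamB ((3 : ℝ) • Ric n b g F - RicS n b g F)) = 0 := trg_lamB n b g hgs _
  have tL4 : trg n b g (lamB (Ric n b g F + RicS n b g F)) = 0 := trg_lamB n b g hgs _
  have eh1 : ∀ x y : V, (symB (Ric n b g F + RicS n b g F)) x y
      = (Ric n b g F x y + RicS n b g F x y + Ric n b g F y x + RicS n b g F y x) / 2 := fun x y => by
    simp only [symB, Pi.add_apply]; ring
  have eh2 : ∀ x y : V, (symB (Ric n b g F - RicS n b g F)) x y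
      = (Ric n b g F x y - RicS n b g F x y + Ric n b g F y x - RicS n b g F y x) / 2 := fun x y => by
    simp only [symB, Pi.sub_apply]; ring
  have eh3 : ∀ x y : V, (lamB ((3 : ℝ) • Ric n b g F - RicS n b g F)) x y
      = (3 * Ric n b g F x y - RicS n b g F x y - 3 * Ric n b g F y x + RicS n b g F y x) / 2 := fun x y => by
    simp only [lamB, Pi.sub_apply, Pi.smul_apply, smul_eq_mul]; ring
  have eh4 : ∀ x y : V, (lamB (Ric n b g F + RicS n b g F)) x y
      = (Ric n b g F x y + RicS n b g F x y - Ric n b g F y x - RicS n b g F y x) / 2 := fun x y => by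
    simp only [lamB, Pi.add_apply]; ring
  -- goal 1
  have e1 : RicS n b g (al1 n b g F) = Ric n b g (al1 n b g F) := by
    funext x y
    simp only [al1, RicS_smul_pt n b g, Ric_smul_pt n b g]
    rw [RicS_wedge n b g hgb hgs hgnd 0 g hgb, Ric_wedge n b g hgb hgs hgnd 0 g hgb, tg]
    ring
  -- goal 2
  have e2 : RicS n b g (al2 n b g F) = Ric n b g (al2 n b g F) := by
    funext x y
    simp only [al2, RicS_add_pt n b g, RicS_smul_pt n b g, Ric_add_pt n b g,
      Ric_smul_pt n b g]
    rw [RicS_wedge n b g hgb hgs hgnd 1 _ hB1, Ric_wedge n b g hgb hgs hgnd 1 _ hB1,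
      RicS_wedge n b g hgb hgs hgnd 0 g hgb, Ric_wedge n b g hgb hgs hgnd 0 g hgb, tg]
    ring
  -- goal 3
  have e3 : RicS n b g (al3 n b g F) = - Ric n b g (al3 n b g F) := by
    funext x y
    simp only [al3, Pi.neg_apply, RicS_smul_pt n b g, Ric_smul_pt n b g]
    rw [RicS_wedge n b g hgb hgs hgnd (-1) _ hB2, Ric_wedge n b g hgb hgs hgnd (-1) _ hB2]
    ring
  -- goal 4
  have e4 : RicS n b g (al4 n b g F) = - Ric n b g (al4 n b g F) := by
    funext x y
    simp only [al4, Pi.neg_apply, RicS_smul_pt n b g, Ric_smul_pt n b g,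
      RicS_add_pt n b g, Ric_add_pt n b g]
    rw [RicS_prodB n b g hgb hgs hgnd _ hB3, Ric_prodB n b g hgb hgs hgnd _ hB3,
      RicS_wedge n b g hgb hgs hgnd (-1) _ hB3, Ric_wedge n b g hgb hgs hgnd (-1) _ hB3,
      eh3 x y, eh3 y x]
    ring
  -- goal 5
  have e5 : RicS n b g (al5 n b g F) = (3 : ℝ) • Ric n b g (al5 n b g F) := by
    funext x y
    simp only [al5, Pi.smul_apply, smul_eq_mul, RicS_smul_pt n b g,
      Ric_smul_pt n b g, RicS_add_pt n b g, Ric_add_pt n b g]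
    rw [RicS_prodB n b g hgb hgs hgnd _ hB4, Ric_prodB n b g hgb hgs hgnd _ hB4,
      RicS_wedge n b g hgb hgs hgnd 3 _ hB4, Ric_wedge n b g hgb hgs hgnd 3 _ hB4,
      eh4 x y, eh4 y x, tL4]
    ring
  -- goal 6
  have e6 : RicS n b g (al6 n b g F) = 0 := by
    funext x y
    simp only [al6, Pi.zero_apply, RicS_sub_pt n b g]
    rw [RicS_psi n b g hgs F]
    simp only [al1, al2, RicS_add_pt n b g, RicS_smul_pt n b g]
    rw [RicS_wedge n b g hgb hgs hgnd 0 g hgb, RicS_wedge n b g hgb hgs hgnd 1 _ hB1,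
      tg, th1, eh1 x y]
    field_simp
    ring
  -- goal 7
  have e7 : RicS n b g (al7 n b g F) = 0 := by
    funext x y
    simp only [al7, Pi.zero_apply, RicS_sub_pt n b g]
    rw [RicS_mu n b g hgs F ha hb]
    simp only [al3, al4, RicS_add_pt n b g, RicS_smul_pt n b g]
    rw [RicS_wedge n b g hgb hgs hgnd (-1) _ hB2, RicS_prodB n b g hgb hgs hgnd _ hB3,
      RicS_wedge n b g hgb hgs hgnd (-1) _ hB3, th2, tL3, eh2 x y, eh3 x y]
    field_simp
    ring
  -- goal 8
  have e8 : RicS n b g (al8 n b g F) = 0 := by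
    funext x y
    simp only [al8, Pi.zero_apply, RicS_sub_pt n b g]
    rw [RicS_mu n b g hgs F ha hb, RicS_psi n b g hgs F]
    simp only [al5, RicS_add_pt n b g, RicS_smul_pt n b g]
    rw [RicS_prodB n b g hgb hgs hgnd _ hB4, RicS_wedge n b g hgb hgs hgnd 3 _ hB4, tL4, eh4 x y]
    field_simp
    ring
  -- trg formulas
  have hRS2 : ∀ x y : V, RicS n b g (al2 n b g F) x y
      = (((-1 : ℝ) / (2 * ((n : ℝ) - 2))) * (1 - 1 * ((n : ℝ) - 1))) * (symB (Ric n b g F + RicS n b g F)) x y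
        + (-((-1 : ℝ) / (2 * ((n : ℝ) - 2))) * trg n b g (symB (Ric n b g F + RicS n b g F))
            + ((2 * tau n b g F) / ((n : ℝ) * ((n : ℝ) - 2))) * (1 - (n : ℝ))) * g x y := by
    intro x y
    simp only [al2, RicS_add_pt n b g, RicS_smul_pt n b g]
    rw [RicS_wedge n b g hgb hgs hgnd 1 _ hB1, RicS_wedge n b g hgb hgs hgnd 0 g hgb, tg]
    ring
  have t2 : trg n b g (RicS n b g (al2 n b g F)) = 0 := by
    rw [trg_pt n b g _ _ _ _ _ hRS2, th1, tg]
    field_simp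
    ring
  have hRS3 : ∀ x y : V, RicS n b g (al3 n b g F) x y
      = (((-1 : ℝ) / (2 * (n : ℝ))) * (1 - (-1) * ((n : ℝ) - 1))) * (symB (Ric n b g F - RicS n b g F)) x y
        + (-((-1 : ℝ) / (2 * (n : ℝ))) * trg n b g (symB (Ric n b g F - RicS n b g F))) * g x y := by
    intro x y
    simp only [al3, RicS_smul_pt n b g]
    rw [RicS_wedge n b g hgb hgs hgnd (-1) _ hB2]
    ring
  have t3 : trg n b g (RicS n b g (al3 n b g F)) = 0 := by
    rw [trg_pt n b g _ _ _ _ _ hRS3, th2, tg]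
    ring
  have hRS4 : ∀ x y : V, RicS n b g (al4 n b g F) x y
      = (((-1 : ℝ) / (4 * ((n : ℝ) + 2))) * (2 + (1 - (-1) * ((n : ℝ) - 1)))) * (lamB ((3 : ℝ) • Ric n b g F - RicS n b g F)) x y
        + (-((-1 : ℝ) / (4 * ((n : ℝ) + 2))) * trg n b g (lamB ((3 : ℝ) • Ric n b g F - RicS n b g F))) * g x y := by
    intro x y
    simp only [al4, RicS_smul_pt n b g, RicS_add_pt n b g]
    rw [RicS_prodB n b g hgb hgs hgnd _ hB3, RicS_wedge n b g hgb hgs hgnd (-1) _ hB3]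
    ring
  have t4 : trg n b g (RicS n b g (al4 n b g F)) = 0 := by
    rw [trg_pt n b g _ _ _ _ _ hRS4, tL3]
    ring
  have hRS5 : ∀ x y : V, RicS n b g (al5 n b g F) x y
      = (((-1 : ℝ) / (4 * ((n : ℝ) - 2))) * (2 + (1 - 3 * ((n : ℝ) - 1)))) * (lamB (Ric n b g F + RicS n b g F)) x y
        + (-((-1 : ℝ) / (4 * ((n : ℝ) - 2))) * trg n b g (lamB (Ric n b g F + RicS n b g F))) * g x y := by
    intro x y
    simp only [al5, RicS_smul_pt n b g, RicS_add_pt n b g]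
    rw [RicS_prodB n b g hgb hgs hgnd _ hB4, RicS_wedge n b g hgb hgs hgnd 3 _ hB4]
    ring
  have t5 : trg n b g (RicS n b g (al5 n b g F)) = 0 := by
    rw [trg_pt n b g _ _ _ _ _ hRS5, tL4]
    ring
  have tzero : trg n b g (0 : V → V → ℝ) = 0 := by
    show ∑ i, ∑ j, ginv n b g i j * (0 : V → V → ℝ) (b i) (b j) = 0
    simp
  have t6 : trg n b g (RicS n b g (al6 n b g F)) = 0 := by rw [e6]; exact tzero
  have t7 : trg n b g (RicS n b g (al7 n b g F)) = 0 := by rw [e7]; exact tzero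
  have t8 : trg n b g (RicS n b g (al8 n b g F)) = 0 := by rw [e8]; exact tzero
  exact ⟨e1, e2, e3, e4, e5, e6, e7, e8, t2, t3, t4, t5, t6, t7, t8⟩


end GCT
end

section
/- Let R ∈ 𝔣(V,g) be such that R* ∈ 𝔣(V,g) as well (i.e., R, R* ∈ 𝔯(V) and both Ric(R), Ric(R*) are symmetric). Then, with Ric := Ric(R), Ric* := Ric*(R), τ := τ(R): (1) α₁(R) = −(τ/(n(n−1))) g∧g; (2) α₂(R) = −(1/(2(n−2)))(Ric + Ric*)∧₁g + (2τ/(n(n−2))) g∧g; (3) α₃(R) = −(1/(2n))(Ric − Ric*)∧_{−1}g; (4) α₄(R) = 0 = α₅(R); (5) α₆(R) = (1/2)(R + R*) − α₁(R) − α₂(R); (6) α₇(R) = (1/2)(R − R*) − α₃(R); (7) α₈(R) = 0. -/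
open scoped BigOperators
open Pointwise

namespace GCT

variable {V : Type*} [AddCommGroup V] [Module ℝ V]

variable (n : ℕ) (b : Module.Basis (Fin n) ℝ V) (g : V → V → ℝ)

theorem stmt16 {V : Type*} [AddCommGroup V] [Module ℝ V]
    (n : ℕ) (hn : 3 ≤ n) (b : Module.Basis (Fin n) ℝ V)
    (g : V → V → ℝ) (hgb : IsBilin g) (hgs : ∀ x y, g x y = g y x)
    (hgnd : ∀ x : V, (∀ y : V, g x y = 0) → x = 0) :
    ∀ F ∈ rSet V, conj F ∈ rSet V →
      (∀ x y, Ric n b g F x y = Ric n b g F y x) →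
      (∀ x y, Ric n b g (conj F) x y = Ric n b g (conj F) y x) →
      al1 n b g F = (-(tau n b g F) / ((n : ℝ) * ((n : ℝ) - 1))) • wedge 0 g g ∧
      al2 n b g F =
        ((-1 : ℝ) / (2 * ((n : ℝ) - 2))) • wedge 1 (Ric n b g F + RicS n b g F) g
          + ((2 * tau n b g F) / ((n : ℝ) * ((n : ℝ) - 2))) • wedge 0 g g ∧
      al3 n b g F = ((-1 : ℝ) / (2 * (n : ℝ))) • wedge (-1) (Ric n b g F - RicS n b g F) g ∧
      (al4 n b g F = 0 ∧ al5 n b g F = 0) ∧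
      al6 n b g F = ((1 : ℝ) / 2) • (F + conj F) - al1 n b g F - al2 n b g F ∧
      al7 n b g F = ((1 : ℝ) / 2) • (F - conj F) - al3 n b g F ∧
      al8 n b g F = 0 := by

  intro F hF hFc hRic hRicC
  obtain ⟨hFm, hA, hB⟩ := hF
  have hC : ∀ a b c d : V, F a b d c + F b c d a + F c a d b = 0 := by
    intro a b c d
    have h := hFc.2.2 a b c d
    simp only [conj] at h
    linarith
  -- pair symmetry of F + F*
  have hT1 : ∀ x y z w : V, F x y z w - F x y w z - F z w x y + F z w y x = 0 := by
    intro x y z w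
    linarith [hA x y z w, hC x y z w, hA x z w y, hB x z w y, hC x w y z,
      hA x w z y, hB y z w x]
  have hT2 : ∀ x y z w : V,
      F x w z y + F x z w y + F w y z x + F z y w x - F x y z w - F x y w z = 0 := by
    intro x y z w
    linarith [hA x y z w, hA x y w z, hC x z y w, hC x w y z]
  -- RicS F = Ric (conj F)
  have hRS : RicS n b g F = Ric n b g (conj F) := by
    funext x y
    unfold RicS Ric
    refine Finset.sum_congr rfl fun i _ => Finset.sum_congr rfl fun j _ => ?_
    simp only [conj]
    rw [hA x (b i) (b j) y]
  have hRSsym : ∀ x y, RicS n b g F x y = RicS n b g F y x := by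
    intro x y; rw [hRS]; exact hRicC x y
  have hl1 : ∀ x y, lamB ((3 : ℝ) • Ric n b g F - RicS n b g F) x y = 0 := by
    intro x y
    simp only [lamB, Pi.sub_apply, Pi.smul_apply, smul_eq_mul]
    rw [hRic x y, hRSsym x y]; ring
  have hl2 : ∀ x y, lamB (Ric n b g F + RicS n b g F) x y = 0 := by
    intro x y
    simp only [lamB, Pi.add_apply]
    rw [hRic x y, hRSsym x y]; ring
  have hs1 : symB (Ric n b g F + RicS n b g F) = Ric n b g F + RicS n b g F := by
    funext x y
    simp only [symB, Pi.add_apply]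
    rw [hRic x y, hRSsym x y]; ring
  have hs2 : symB (Ric n b g F - RicS n b g F) = Ric n b g F - RicS n b g F := by
    funext x y
    simp only [symB, Pi.sub_apply]
    rw [hRic x y, hRSsym x y]; ring
  have h4 : al4 n b g F = 0 := by
    funext x y z w
    simp only [al4, Pi.smul_apply, Pi.add_apply, smul_eq_mul, prodB, wedge, Pi.zero_apply]
    rw [hl1 x y, hl1 x z, hl1 y z, hl1 x w, hl1 y w]; ring
  have h5 : al5 n b g F = 0 := by
    funext x y z w
    simp only [al5, Pi.smul_apply, Pi.add_apply, smul_eq_mul, prodB, wedge, Pi.zero_apply]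
    rw [hl2 x y, hl2 x z, hl2 y z, hl2 x w, hl2 y w]; ring
  have hpsi : psi F = ((1 : ℝ) / 2) • (F + conj F) := by
    funext x y z w
    simp only [psi, Pi.smul_apply, Pi.add_apply, smul_eq_mul, conj]
    linarith [hT1 x y z w, hA x y w z, hA z w y x]
  have hmu : mu F = ((1 : ℝ) / 2) • (F - conj F) := by
    funext x y z w
    simp only [mu, Pi.smul_apply, Pi.sub_apply, smul_eq_mul, conj]
    linarith [hT2 x y z w]
  refine ⟨rfl, ?_, ?_, ⟨h4, h5⟩, ?_, ?_, ?_⟩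
  · unfold al2; rw [hs1]
  · unfold al3; rw [hs2]
  · unfold al6; rw [hpsi]
  · unfold al7; rw [hmu, h4, sub_zero]
  · unfold al8
    rw [hmu, hpsi, h5]
    funext x y z w
    simp only [Pi.sub_apply, Pi.smul_apply, Pi.add_apply, Pi.zero_apply, smul_eq_mul, conj]
    ring


end GCT
end
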